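/- Let R be a local ring with maximal ideal m, and T a free R-module of rank 2 with a decomposition T = T₁ ⊕ T₂ into nonzero R-submodules that are torsion-free, such that an endomorphism g₀ of T acts on T₁ and T₂ through scalars that are distinct modulo m. Then T₁ and T₂ are each free of rank one over R. -/

import Mathlib

open IsLocalRing

/-- A submodule admitting a linear retraction of the ambient finite free module over a
local ring is finite and free. -/
lemma aux_summand_free {R T : Type*} [CommRing R] [IsLocalRing R] [AddCommGroup T] [Module R T]
    [Module.Free R T] [Module.Finite R T]
    (T₁ T₂ : Submodule R T) (hsup : T₁ ⊔ T₂ = ⊤)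
    (p : T →ₗ[R] T) (hp1 : ∀ x ∈ T₁, p x = x) (hp2 : ∀ x ∈ T₂, p x = 0) :
    Module.Finite R T₁ ∧ Module.Free R T₁ := by
  have hmem : ∀ t : T, p t ∈ T₁ := by
    intro t
    have ht : t ∈ T₁ ⊔ T₂ := hsup ▸ Submodule.mem_top
    obtain ⟨t₁, ht₁, t₂, ht₂, rfl⟩ := Submodule.mem_sup.mp ht
    rw [map_add, hp1 _ ht₁, hp2 _ ht₂, add_zero]
    exact ht₁
  have hrange : LinearMap.range p = T₁ := by
    apply le_antisymm
    · rintro x ⟨t, rfl⟩; exact hmem t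
    · intro x hx; exact ⟨x, hp1 x hx⟩
  have hfin : Module.Finite R T₁ := by
    have : Module.Finite R (LinearMap.range p) := Module.Finite.range p
    rwa [hrange] at this
  refine ⟨hfin, ?_⟩
  -- T₁ is a direct summand of T, hence projective
  have hproj : Module.Projective R T₁ := by
    refine Module.Projective.of_split T₁.subtype (p.codRestrict T₁ hmem) ?_
    ext x
    simp [hp1 x.1 x.2]
  have : Module.FinitePresentation R T₁ := Module.finitePresentation_of_projective R T₁
  exact Module.free_of_flat_of_isLocalRing

/-- A finite free module of finrank one is linearly equivalent to the base ring. -/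
lemma aux_equiv_of_finrank_one {R M : Type*} [CommRing R] [Nontrivial R] [AddCommGroup M]
    [Module R M] [Module.Free R M] [Module.Finite R M] (h : Module.finrank R M = 1) :
    Nonempty (M ≃ₗ[R] R) := by
  have hcard : Fintype.card (Module.Free.ChooseBasisIndex R M) = 1 := by
    rw [← Module.finrank_eq_card_chooseBasisIndex, h]
  exact ⟨((Module.Free.chooseBasis R M).reindex
    (Fintype.equivFinOfCardEq hcard)).equivFun.trans (LinearEquiv.funUnique (Fin 1) R R)⟩

/-- Let `R` be a local ring and `T` a free `R`-module of rank `2` with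
an internal decomposition `T = T₁ ⊕ T₂` into nonzero torsion-free submodules, such that an
endomorphism `g₀` of `T` acts on `T₁` and `T₂` through scalars `c₁, c₂` that are distinct
modulo the maximal ideal. Then `T₁` and `T₂` are each free of rank one over `R`. -/
theorem summands_free_rank_one
    {R T : Type*} [CommRing R] [IsLocalRing R] [AddCommGroup T] [Module R T]
    [Module.Free R T] (hrk : Module.rank R T = 2)
    (T₁ T₂ : Submodule R T)
    (h₁ne : T₁ ≠ ⊥) (h₂ne : T₂ ≠ ⊥)
    (h₁tf : ∀ (c : R) (x : T), x ∈ T₁ → c • x = 0 → c = 0 ∨ x = 0)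
    (h₂tf : ∀ (c : R) (x : T), x ∈ T₂ → c • x = 0 → c = 0 ∨ x = 0)
    (hinf : T₁ ⊓ T₂ = ⊥) (hsup : T₁ ⊔ T₂ = ⊤)
    (g₀ : T →ₗ[R] T) (c₁ c₂ : R)
    (hg₁ : ∀ x ∈ T₁, g₀ x = c₁ • x) (hg₂ : ∀ x ∈ T₂, g₀ x = c₂ • x)
    (hc : Ideal.Quotient.mk (maximalIdeal R) c₁ ≠ Ideal.Quotient.mk (maximalIdeal R) c₂) :
    Nonempty (T₁ ≃ₗ[R] R) ∧ Nonempty (T₂ ≃ₗ[R] R) := by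
  -- `c₁ - c₂` is a unit
  have hd : IsUnit (c₁ - c₂) := by
    by_contra h
    exact hc (Ideal.Quotient.eq.mpr ((IsLocalRing.mem_maximalIdeal _).mpr h))
  obtain ⟨u, hu⟩ := hd
  -- `T` is finite
  have hfinrkT : Module.finrank R T = 2 := Module.finrank_eq_of_rank_eq (by exact_mod_cast hrk)
  have hTfin : Module.Finite R T := Module.finite_of_finrank_pos (by omega)
  -- the projection onto `T₁` along `T₂`
  set p : T →ₗ[R] T := (↑u⁻¹ : R) • (g₀ - c₂ • LinearMap.id) with hp
  have hp1 : ∀ x ∈ T₁, p x = x := by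
    intro x hx
    have : g₀ x - c₂ • x = (c₁ - c₂) • x := by rw [hg₁ x hx, sub_smul]
    simp only [hp, LinearMap.smul_apply, LinearMap.sub_apply, LinearMap.smul_apply,
      LinearMap.id_apply, this, ← hu, smul_smul, Units.inv_mul, one_smul]
  have hp2 : ∀ x ∈ T₂, p x = 0 := by
    intro x hx
    simp [hp, hg₂ x hx]
  -- the projection onto `T₂` along `T₁`
  set q : T →ₗ[R] T := LinearMap.id - p with hq
  have hq2 : ∀ x ∈ T₂, q x = x := by
    intro x hx
    simp [hq, hp2 x hx]
  have hq1 : ∀ x ∈ T₁, q x = 0 := by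
    intro x hx
    simp [hq, hp1 x hx]
  obtain ⟨hfin₁, hfree₁⟩ := aux_summand_free T₁ T₂ hsup p hp1 hp2
  obtain ⟨hfin₂, hfree₂⟩ := aux_summand_free T₂ T₁ (sup_comm T₂ T₁ ▸ hsup) q hq2 hq1
  -- rank counting
  have hcompl : IsCompl T₁ T₂ := ⟨disjoint_iff.mpr hinf, codisjoint_iff.mpr hsup⟩
  have hsum : Module.finrank R T₁ + Module.finrank R T₂ = 2 := by
    have := (Submodule.prodEquivOfIsCompl T₁ T₂ hcompl).finrank_eq
    rwa [Module.finrank_prod, hfinrkT] at this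
  have hnt₁ : Nontrivial T₁ := Submodule.nontrivial_iff_ne_bot.mpr h₁ne
  have hnt₂ : Nontrivial T₂ := Submodule.nontrivial_iff_ne_bot.mpr h₂ne
  have hpos₁ : 0 < Module.finrank R T₁ := by
    rw [Module.finrank_eq_card_chooseBasisIndex]
    have : Nonempty (Module.Free.ChooseBasisIndex R T₁) :=
      Module.Basis.index_nonempty (Module.Free.chooseBasis R T₁)
    exact Fintype.card_pos
  have hpos₂ : 0 < Module.finrank R T₂ := by
    rw [Module.finrank_eq_card_chooseBasisIndex]
    have : Nonempty (Module.Free.ChooseBasisIndex R T₂) :=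
      Module.Basis.index_nonempty (Module.Free.chooseBasis R T₂)
    exact Fintype.card_pos
  exact ⟨aux_equiv_of_finrank_one (by omega), aux_equiv_of_finrank_one (by omega)⟩
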